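/- #{σ ∈ C_n : Θ_n(σ) = ∅} = Σ_{h=0}^{n-1} (-1)^h · C(n,h) · (n-h-1)! + (-1)^n, where C_n is the set of n-cycles in S_n and Θ_n(σ) = {k ∈ [n] : σ(k) = k+1 mod n}. -/

import Mathlib

/-- The successor `k+1 mod n`, taking values in `Fin n`. -/
def cyclicSucc {n : ℕ} (j : Fin n) : Fin n := ⟨((j : ℕ) + 1) % n, Nat.mod_lt _ j.pos⟩

/-- `σ` consists of a single cycle through all of `Fin n` (an `n`-cycle). -/
def IsFullCycle {n : ℕ} (σ : Equiv.Perm (Fin n)) : Prop :=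
  ∀ x y : Fin n, ∃ i : ℕ, (σ ^ i) x = y

namespace Stmt16

open Equiv Equiv.Perm Finset

/-- full cycle predicate on a general type -/
def FC {α : Type} (σ : Equiv.Perm α) : Prop := ∀ x y : α, ∃ i : ℕ, (σ ^ i) x = y

set_option linter.unusedSectionVars false

variable {α : Type} [DecidableEq α]

lemma pow_apply_succ (σ : Perm α) (i : ℕ) (x : α) : (σ ^ (i + 1)) x = (σ ^ i) (σ x) := by
  rw [pow_succ, Equiv.Perm.mul_apply]

lemma pow_apply_succ' (σ : Perm α) (i : ℕ) (x : α) : (σ ^ (i + 1)) x = σ ((σ ^ i) x) := by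
  rw [pow_succ', Equiv.Perm.mul_apply]

lemma pow_fixed (σ : Perm α) (x : α) (h : σ x = x) : ∀ i, (σ ^ i) x = x := by
  intro i
  induction i with
  | zero => simp
  | succ i ih => rw [pow_apply_succ, h, ih]

lemma fc_no_fixed {σ : Perm α} (hσ : FC σ) {u v : α} (huv : u ≠ v) (z : α) : σ z ≠ z := by
  intro h
  have hw : ∃ w, w ≠ z := by
    by_cases hz : z = u
    · exact ⟨v, by rw [hz]; exact fun hh => huv hh.symm⟩
    · exact ⟨u, fun hh => hz hh.symm⟩
  obtain ⟨w, hw⟩ := hw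
  obtain ⟨i, hi⟩ := hσ z w
  rw [pow_fixed σ z h i] at hi
  exact hw hi.symm

lemma swap_mul_fixed (b : α) (σ : Perm α) : (Equiv.swap b (σ b) * σ) b = b := by
  simp [Equiv.Perm.mul_apply, Equiv.swap_apply_right]

lemma swap_mul_ne_iff (b : α) (σ : Perm α) (x : α) :
    x ≠ b ↔ (Equiv.swap b (σ b) * σ) x ≠ b := by
  constructor
  · intro hx h
    exact hx ((Equiv.swap b (σ b) * σ).injective (h.trans (swap_mul_fixed b σ).symm))
  · intro h hx
    exact h (by rw [hx, swap_mul_fixed])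

/-- delete `b` from the cycle of `σ` -/
def del (b : α) (σ : Perm α) : Perm {x : α // x ≠ b} :=
  (Equiv.swap b (σ b) * σ).subtypePerm (fun x => (swap_mul_ne_iff b σ x).symm)

lemma del_coe (b : α) (σ : Perm α) (x : {x : α // x ≠ b}) :
    (del b σ x : α) = Equiv.swap b (σ b) (σ x) := rfl

lemma del_apply_of_ne (b : α) (σ : Perm α) (x : {x : α // x ≠ b}) (h : σ (x : α) ≠ b) :
    (del b σ x : α) = σ (x : α) := by
  rw [del_coe]
  apply Equiv.swap_apply_of_ne_of_ne h
  intro hh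
  exact x.2 (σ.injective hh)

lemma del_apply_of_eq (b : α) (σ : Perm α) (x : {x : α // x ≠ b}) (h : σ (x : α) = b) :
    (del b σ x : α) = σ b := by
  rw [del_coe, h, Equiv.swap_apply_left]

/-- insert `b` into the cycle of `σ'` right after `p` -/
def ins (b : α) (σ' : Perm {x : α // x ≠ b}) (p : {x : α // x ≠ b}) : Perm α :=
  Equiv.swap b (σ' p : α) * Equiv.Perm.ofSubtype σ'

lemma ins_apply_p (b : α) (σ' : Perm {x : α // x ≠ b}) (p : {x : α // x ≠ b}) :
    ins b σ' p (p : α) = b := by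
  simp only [ins, Equiv.Perm.mul_apply]
  rw [Equiv.Perm.ofSubtype_apply_of_mem σ' p.2]
  simp [Equiv.swap_apply_right]

lemma ins_apply_b (b : α) (σ' : Perm {x : α // x ≠ b}) (p : {x : α // x ≠ b}) :
    ins b σ' p b = (σ' p : α) := by
  simp only [ins, Equiv.Perm.mul_apply]
  rw [Equiv.Perm.ofSubtype_apply_of_not_mem σ' (by simp)]
  simp [Equiv.swap_apply_left]

lemma ins_apply_other (b : α) (σ' : Perm {x : α // x ≠ b}) (p : {x : α // x ≠ b})
    (x : {x : α // x ≠ b}) (hx : x ≠ p) : ins b σ' p (x : α) = (σ' x : α) := by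
  simp only [ins, Equiv.Perm.mul_apply]
  rw [Equiv.Perm.ofSubtype_apply_of_mem σ' x.2]
  apply Equiv.swap_apply_of_ne_of_ne (σ' x).2
  intro h
  exact hx (σ'.injective (Subtype.ext h))

lemma del_ins (b : α) (σ' : Perm {x : α // x ≠ b}) (p : {x : α // x ≠ b}) :
    del b (ins b σ' p) = σ' := by
  ext x
  by_cases hx : x = p
  · subst hx
    rw [del_apply_of_eq b _ x (ins_apply_p b σ' x), ins_apply_b]
  · rw [del_apply_of_ne b _ x (by rw [ins_apply_other b σ' p x hx]; exact (σ' x).2),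
      ins_apply_other b σ' p x hx]

lemma ins_del (b : α) (σ : Perm α) (hb : σ b ≠ b) (p : {x : α // x ≠ b}) (hp : σ (p : α) = b) :
    ins b (del b σ) p = σ := by
  ext x
  by_cases hxb : x = b
  · rw [hxb, ins_apply_b, del_apply_of_eq b σ p hp]
  · by_cases hxp : x = (p : α)
    · subst hxp
      rw [ins_apply_p, hp]
    · have : (⟨x, hxb⟩ : {x : α // x ≠ b}) ≠ p := fun h => hxp (congrArg Subtype.val h)
      have h2 : σ x ≠ b := fun h => hxp (σ.injective (h.trans hp.symm))
      rw [show x = ((⟨x, hxb⟩ : {x : α // x ≠ b}) : α) from rfl,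
        ins_apply_other b (del b σ) p _ this, del_apply_of_ne b σ _ h2]


lemma del_reach (b : α) (σ : Perm α) (hb : σ b ≠ b) :
    ∀ j (x y : {x : α // x ≠ b}), (σ ^ j) (x : α) = (y : α) → ∃ i, ((del b σ) ^ i) x = y := by
  intro j
  induction j using Nat.strong_induction_on with
  | _ j IH =>
    intro x y hj
    match j with
    | 0 => exact ⟨0, by ext; simpa using hj⟩
    | j + 1 =>
      by_cases h1 : σ (x : α) = b
      · match j with
        | 0 =>
          rw [pow_one] at hj
          exact (y.2 (hj.symm.trans h1)).elim
        | j + 1 =>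
          have hz : (σ ^ (j + 1 + 1)) (x : α) = (σ ^ j) (σ b) := by
            rw [pow_apply_succ, h1, pow_apply_succ]
          rw [hz] at hj
          obtain ⟨i, hi⟩ := IH j (by omega) ⟨σ b, fun h => hb h⟩ y hj
          refine ⟨i + 1, ?_⟩
          rw [pow_apply_succ]
          convert hi using 2
          ext
          rw [del_apply_of_eq b σ x h1]
      · rw [pow_apply_succ] at hj
        obtain ⟨i, hi⟩ := IH j (by omega) ⟨σ (x : α), h1⟩ y hj
        refine ⟨i + 1, ?_⟩
        rw [pow_apply_succ]
        convert hi using 2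
        ext
        rw [del_apply_of_ne b σ x h1]

lemma del_fc (b : α) (σ : Perm α) (hb : σ b ≠ b) (hσ : FC σ) : FC (del b σ) := by
  intro x y
  obtain ⟨j, hj⟩ := hσ (x : α) (y : α)
  exact del_reach b σ hb j x y hj

lemma ins_reach (b : α) (σ' : Perm {x : α // x ≠ b}) (p : {x : α // x ≠ b}) :
    ∀ (i : ℕ) (x : {x : α // x ≠ b}), ∃ j, ((ins b σ' p) ^ j) (x : α) = ((σ' ^ i) x : α) := by
  intro i
  induction i with
  | zero => exact fun x => ⟨0, by simp⟩
  | succ i ih =>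
    intro x
    obtain ⟨j, hj⟩ := ih x
    set z := (σ' ^ i) x with hz
    have step : ∃ k, ((ins b σ' p) ^ k) (z : α) = (σ' z : α) := by
      by_cases hzp : z = p
      · refine ⟨2, ?_⟩
        rw [show (2:ℕ) = 1 + 1 from rfl, pow_apply_succ, pow_one, hzp, ins_apply_p, ins_apply_b]
      · exact ⟨1, by rw [pow_one, ins_apply_other b σ' p z hzp]⟩
    obtain ⟨k, hk⟩ := step
    refine ⟨k + j, ?_⟩
    rw [pow_add, Equiv.Perm.mul_apply, hj, hk, pow_apply_succ']

lemma ins_fc (b : α) (σ' : Perm {x : α // x ≠ b}) (p : {x : α // x ≠ b}) (hσ' : FC σ') :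
    FC (ins b σ' p) := by
  intro x y
  -- reduce x to an element of the subtype
  have hx : ∃ (x' : {x : α // x ≠ b}) (j₀ : ℕ), ((ins b σ' p) ^ j₀) x = (x' : α) := by
    by_cases h : x = b
    · exact ⟨σ' p, 1, by rw [pow_one, h, ins_apply_b]⟩
    · exact ⟨⟨x, h⟩, 0, rfl⟩
  have hy : ∃ (y' : {x : α // x ≠ b}) (j₁ : ℕ), ((ins b σ' p) ^ j₁) (y' : α) = y := by
    by_cases h : y = b
    · exact ⟨p, 1, by rw [pow_one, ins_apply_p, h]⟩
    · exact ⟨⟨y, h⟩, 0, rfl⟩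
  obtain ⟨x', j₀, hx⟩ := hx
  obtain ⟨y', j₁, hy⟩ := hy
  obtain ⟨i, hi⟩ := hσ' x' y'
  obtain ⟨j, hj⟩ := ins_reach b σ' p i x'
  refine ⟨j₁ + j + j₀, ?_⟩
  rw [pow_add, Equiv.Perm.mul_apply, hx, pow_add, Equiv.Perm.mul_apply, hj, hi, hy]


attribute [local instance] Classical.propDecidable

lemma fc_subsingleton {β : Type} [Subsingleton β] (σ : Perm β) : FC σ :=
  fun x y => ⟨0, by simpa using Subsingleton.elim x y⟩

lemma card_ne (b : α) [Fintype α] : Fintype.card {x : α // x ≠ b} = Fintype.card α - 1 := by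
  have : Fintype.card {x : α // ¬ (x = b)} = Fintype.card α - Fintype.card {x : α // x = b} :=
    Fintype.card_subtype_compl _
  rw [Fintype.card_subtype_eq b] at this
  convert this using 2

lemma count_fc : ∀ (m : ℕ) (α : Type) [Fintype α] [DecidableEq α], Fintype.card α = m →
    ((Finset.univ : Finset (Perm α)).filter FC).card = (m - 1).factorial := by
  intro m
  induction m with
  | zero =>
    intro α _ _ hcard
    have : Subsingleton α := by
      rw [← Fintype.card_le_one_iff_subsingleton]; omega
    rw [Finset.filter_true_of_mem (fun σ _ => fc_subsingleton σ), Finset.card_univ,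
      Fintype.card_perm, hcard]
  | succ m ih =>
    intro α _ _ hcard
    by_cases hm : m = 0
    · subst hm
      have : Subsingleton α := by
        rw [← Fintype.card_le_one_iff_subsingleton]; omega
      rw [Finset.filter_true_of_mem (fun σ _ => fc_subsingleton σ), Finset.card_univ,
        Fintype.card_perm, hcard]
      rfl
    · obtain ⟨b⟩ : Nonempty α := Fintype.card_pos_iff.mp (by omega)
      obtain ⟨u, v, huv⟩ : ∃ u v : α, u ≠ v :=
        Fintype.exists_pair_of_one_lt_card (by omega)
      have key : ((Finset.univ : Finset (Perm α)).filter FC).card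
          = ((Finset.univ : Finset {x : α // x ≠ b}) ×ˢ
              ((Finset.univ : Finset (Perm {x : α // x ≠ b})).filter FC)).card := by
        refine Finset.card_bij'
          (fun σ hσ => (⟨σ⁻¹ b, fun hh => (fc_no_fixed (Finset.mem_filter.mp hσ).2 huv b)
            (by conv_lhs => rw [← hh, ← Equiv.Perm.mul_apply, mul_inv_cancel, Equiv.Perm.one_apply])⟩, del b σ))
          (fun q hq => ins b q.2 q.1) ?_ ?_ ?_ ?_
        · intro σ hσ
          have hfc : FC σ := (Finset.mem_filter.mp hσ).2
          exact Finset.mem_product.mpr ⟨Finset.mem_univ _,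
            Finset.mem_filter.mpr ⟨Finset.mem_univ _, del_fc b σ (fc_no_fixed hfc huv b) hfc⟩⟩
        · intro q hq
          have hfc : FC q.2 := (Finset.mem_filter.mp (Finset.mem_product.mp hq).2).2
          exact Finset.mem_filter.mpr ⟨Finset.mem_univ _, ins_fc b q.2 q.1 hfc⟩
        · intro σ hσ
          have hfc : FC σ := (Finset.mem_filter.mp hσ).2
          exact ins_del b σ (fc_no_fixed hfc huv b) _ (Equiv.apply_symm_apply σ b)
        · intro q hq
          obtain ⟨p, σ'⟩ := q
          have h2 : del b (ins b σ' p) = σ' := del_ins b σ' p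
          have h1 : ((ins b σ' p)⁻¹ b : α) = (p : α) := by
            apply (ins b σ' p).injective
            rw [← Equiv.Perm.mul_apply, mul_inv_cancel, Equiv.Perm.one_apply, ins_apply_p]
          exact Prod.ext_iff.mpr ⟨Subtype.ext h1, h2⟩
      obtain ⟨k, rfl⟩ : ∃ k, m = k + 1 := ⟨m - 1, by omega⟩
      rw [key, Finset.card_product, Finset.card_univ, card_ne b, hcard,
        ih _ (by rw [card_ne b, hcard]; omega)]
      simp [Nat.factorial_succ]

lemma count_constrained : ∀ (h : ℕ) (α : Type) [Fintype α] [DecidableEq α] (τ : Perm α),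
    FC τ → ∀ S : Finset α, S.card = h →
    ((Finset.univ : Finset (Perm α)).filter
        (fun σ => FC σ ∧ ∀ a ∈ S, σ a = τ a)).card
      = (Fintype.card α - h - 1).factorial := by
  intro h
  induction h with
  | zero =>
    intro α _ _ τ hτ S hS
    rw [Finset.card_eq_zero] at hS
    subst hS
    simp only [Finset.notMem_empty, false_implies, implies_true, and_true]
    rw [Nat.sub_zero]
    exact count_fc (Fintype.card α) α rfl
  | succ h ih =>
    intro α _ _ τ hτ S hS
    by_cases hU : S = Finset.univ
    · subst hU
      have hca : Fintype.card α = h + 1 := by rw [← Finset.card_univ, hS]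
      have hsingle : (Finset.univ : Finset (Perm α)).filter
          (fun σ => FC σ ∧ ∀ a ∈ Finset.univ, σ a = τ a) = {τ} := by
        ext σ
        simp only [Finset.mem_filter, Finset.mem_univ, true_and, Finset.mem_singleton]
        constructor
        · rintro ⟨_, hall⟩
          exact Equiv.ext fun a => hall a (by simp)
        · rintro rfl
          exact ⟨hτ, fun a _ => rfl⟩
      rw [hsingle, Finset.card_singleton]
      have : Fintype.card α - (h + 1) - 1 = 0 := by omega
      rw [this]
      rfl
    · have hne : S.Nonempty := Finset.card_pos.mp (by omega)
      obtain ⟨a, haS, hbS⟩ : ∃ a ∈ S, τ a ∉ S := by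
        by_contra hc
        push_neg at hc
        apply hU
        obtain ⟨s, hs⟩ := hne
        have hiter : ∀ i, (τ ^ i) s ∈ S := by
          intro i
          induction i with
          | zero => simpa using hs
          | succ i ihh => rw [pow_apply_succ']; exact hc _ ihh
        apply Finset.eq_univ_iff_forall.mpr
        intro y
        obtain ⟨i, hi⟩ := hτ s y
        exact hi ▸ hiter i
      set b := τ a with hbdef
      have hab : a ≠ b := fun hh => hbS (hh ▸ haS)
      have hfix : ∀ z, τ z ≠ z := fc_no_fixed hτ hab
      have hτ' : FC (del b τ) := del_fc b τ (hfix b) hτ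
      set S' : Finset {x : α // x ≠ b} := (S.erase a).subtype (· ≠ b) with hS'def
      have hcS' : S'.card = h := by
        have hall : ∀ x ∈ S.erase a, x ≠ b := fun x hx hh => hbS (hh ▸ Finset.mem_of_mem_erase hx)
        rw [hS'def, Finset.card_subtype, Finset.filter_true_of_mem hall,
          Finset.card_erase_of_mem haS, hS]
        omega
      have hSlt : S.card < Fintype.card α := by
        rw [← Finset.card_univ]
        exact Finset.card_lt_card (lt_of_le_of_ne (Finset.subset_univ S) hU)
      have key : ((Finset.univ : Finset (Perm α)).filter
            (fun σ => FC σ ∧ ∀ c ∈ S, σ c = τ c)).card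
          = ((Finset.univ : Finset (Perm {x : α // x ≠ b})).filter
            (fun σ' => FC σ' ∧ ∀ c ∈ S', σ' c = del b τ c)).card := by
        refine Finset.card_bij' (fun σ hσ => del b σ) (fun σ' hσ' => ins b σ' ⟨a, hab⟩)
          ?_ ?_ ?_ ?_
        · intro σ hσ
          obtain ⟨-, hfc, hcon⟩ := Finset.mem_filter.mp hσ
          have hσfix : σ b ≠ b := fc_no_fixed hfc hab b
          refine Finset.mem_filter.mpr ⟨Finset.mem_univ _, del_fc b σ hσfix hfc, ?_⟩
          intro c hc
          have hcm : (c : α) ∈ S.erase a := Finset.mem_subtype.mp hc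
          have hca : (c : α) ≠ a := Finset.ne_of_mem_erase hcm
          have hcS : (c : α) ∈ S := Finset.mem_of_mem_erase hcm
          have hτc : τ (c : α) ≠ b := fun hh => hca (τ.injective hh)
          have hσc : σ (c : α) = τ (c : α) := hcon _ hcS
          apply Subtype.ext
          rw [del_apply_of_ne b σ c (hσc ▸ hτc), del_apply_of_ne b τ c hτc, hσc]
        · intro σ' hσ'
          obtain ⟨-, hfc', hcon'⟩ := Finset.mem_filter.mp hσ'
          refine Finset.mem_filter.mpr ⟨Finset.mem_univ _, ins_fc b σ' _ hfc', ?_⟩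
          intro c hc
          by_cases hca : c = a
          · rw [hca]
            exact (ins_apply_p b σ' ⟨a, hab⟩).trans hbdef
          · have hcb : c ≠ b := fun hh => hbS (hh ▸ hc)
            have hmem : (⟨c, hcb⟩ : {x : α // x ≠ b}) ∈ S' :=
              Finset.mem_subtype.mpr (Finset.mem_erase.mpr ⟨hca, hc⟩)
            have hne2 : (⟨c, hcb⟩ : {x : α // x ≠ b}) ≠ ⟨a, hab⟩ :=
              fun hh => hca (congrArg Subtype.val hh)
            have hτc : τ c ≠ b := fun hh => hca (τ.injective hh)
            rw [show c = ((⟨c, hcb⟩ : {x : α // x ≠ b}) : α) from rfl,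
              ins_apply_other b σ' _ _ hne2, hcon' _ hmem, del_apply_of_ne b τ _ hτc]
        · intro σ hσ
          obtain ⟨-, hfc, hcon⟩ := Finset.mem_filter.mp hσ
          exact ins_del b σ (fc_no_fixed hfc hab b) ⟨a, hab⟩ (hcon a haS)
        · intro σ' hσ'
          exact del_ins b σ' ⟨a, hab⟩
      rw [key, ih _ (del b τ) hτ' S' hcS']
      rw [card_ne b]
      congr 1
      omega

open Fin.NatCast in
lemma pow_addRight (m i : ℕ) (x : Fin (m+1)) :
    ((Equiv.addRight (1 : Fin (m+1)) : Perm (Fin (m+1))) ^ i) x = x + (i : Fin (m+1)) := by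
  induction i with
  | zero => simp
  | succ i ihh =>
    rw [pow_apply_succ', ihh, Equiv.coe_addRight, Nat.cast_add, Nat.cast_one]
    show x + ↑i + 1 = _
    rw [add_assoc]

lemma fc_tau (m : ℕ) : FC (Equiv.addRight (1 : Fin (m+1)) : Perm (Fin (m+1))) := by
  intro x y
  refine ⟨((y - x : Fin (m+1)) : ℕ), ?_⟩
  rw [pow_addRight, Fin.cast_val_eq_self]
  abel

lemma cyclicSucc_eq_addRight {m : ℕ} (k : Fin (m+1)) :
    cyclicSucc k = Equiv.addRight (1 : Fin (m+1)) k := by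
  apply Fin.ext
  show ((k : ℕ) + 1) % (m+1) = ((k + 1 : Fin (m+1)) : ℕ)
  rw [Fin.add_def, Fin.val_one']
  show _ = ((k : ℕ) + 1 % (m+1)) % (m+1)
  conv_rhs => rw [Nat.add_mod, Nat.mod_mod, ← Nat.add_mod]

end Stmt16

open Finset in
theorem stmt16 (n : ℕ) :
    (Set.ncard {σ : Equiv.Perm (Fin n) | IsFullCycle σ ∧
        ∀ k : Fin n, σ k ≠ cyclicSucc k} : ℤ)
    =
    (∑ h ∈ Finset.range n, (-1 : ℤ) ^ h * (n.choose h : ℤ) * (Nat.factorial (n - h - 1) : ℤ))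
      + (-1 : ℤ) ^ n := by
  classical
  have hset : {σ : Equiv.Perm (Fin n) | IsFullCycle σ ∧ ∀ k : Fin n, σ k ≠ cyclicSucc k}.ncard
      = ((Finset.univ : Finset (Equiv.Perm (Fin n))).filter
          (fun σ => Stmt16.FC σ ∧ ∀ k : Fin n, σ k ≠ cyclicSucc k)).card := by
    rw [← Set.ncard_coe_finset]
    congr 1
    ext σ
    simp only [Set.mem_setOf_eq, coe_filter, Finset.mem_univ, true_and]
    rfl
  rw [hset]
  match n with
  | 0 =>
    haveI : Subsingleton (Fin 0) := ⟨fun a => a.elim0⟩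
    rw [Finset.filter_true_of_mem
      (fun σ _ => ⟨Stmt16.fc_subsingleton σ, fun k => k.elim0⟩)]
    rw [Finset.card_univ, Fintype.card_perm]
    simp
  | (m + 1) =>
    set N := m + 1 with hN
    set τ : Equiv.Perm (Fin N) := Equiv.addRight (1 : Fin N) with hτdef
    have hτ : Stmt16.FC τ := Stmt16.fc_tau m
    have hcs : ∀ k : Fin N, cyclicSucc k = τ k := fun k => Stmt16.cyclicSucc_eq_addRight k
    have key : ∀ S : Finset (Fin N),
        ((Finset.univ : Finset (Equiv.Perm (Fin N))).filter
          (fun σ => Stmt16.FC σ ∧ ∀ a ∈ S, σ a = τ a)).card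
        = (N - S.card - 1).factorial := by
      intro S
      have := Stmt16.count_constrained S.card (Fin N) τ hτ S rfl
      rw [Fintype.card_fin] at this
      convert this using 3
    simp_rw [hcs]
    -- T σ : set of agreement positions
    set T : Equiv.Perm (Fin N) → Finset (Fin N) :=
      fun σ => Finset.univ.filter (fun k => σ k = τ k) with hT
    set F : Finset (Equiv.Perm (Fin N)) := Finset.univ.filter Stmt16.FC with hF
    have e1 : (((Finset.univ : Finset (Equiv.Perm (Fin N))).filter
          (fun σ => Stmt16.FC σ ∧ ∀ k : Fin N, σ k ≠ τ k)).card : ℤ)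
        = ∑ σ ∈ F, (if T σ = ∅ then (1 : ℤ) else 0) := by
      rw [Finset.sum_boole, hF, Finset.filter_filter]
      norm_num
      congr 2
      ext σ
      constructor
      · rintro ⟨h1, h2⟩
        exact ⟨h1, by rw [hT]; simp only [Finset.filter_eq_empty_iff, Finset.mem_univ,
          true_implies]; exact h2⟩
      · rintro ⟨h1, h2⟩
        refine ⟨h1, ?_⟩
        rw [hT] at h2
        simp only [Finset.filter_eq_empty_iff, Finset.mem_univ, true_implies] at h2
        exact h2
    rw [e1]
    have e2 : ∑ σ ∈ F, (if T σ = ∅ then (1 : ℤ) else 0)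
        = ∑ σ ∈ F, ∑ S ∈ (T σ).powerset, (-1 : ℤ) ^ S.card := by
      refine Finset.sum_congr rfl fun σ _ => ?_
      rw [Finset.sum_powerset_neg_one_pow_card]
    rw [e2]
    have e3 : ∀ σ, ∑ S ∈ (T σ).powerset, (-1 : ℤ) ^ S.card
        = ∑ S ∈ (Finset.univ : Finset (Fin N)).powerset,
            (if S ⊆ T σ then (-1 : ℤ) ^ S.card else 0) := by
      intro σ
      rw [← Finset.sum_filter]
      congr 1
      ext R
      simp [Finset.mem_powerset, Finset.subset_univ]
    simp_rw [e3]
    rw [Finset.sum_comm]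
    have e5 : ∀ S : Finset (Fin N),
        ∑ σ ∈ F, (if S ⊆ T σ then (-1 : ℤ) ^ S.card else 0)
        = (-1 : ℤ) ^ S.card * ((N - S.card - 1).factorial : ℤ) := by
      intro S
      rw [← Finset.sum_filter, Finset.sum_const, hF, Finset.filter_filter]
      have hpred : ∀ σ : Equiv.Perm (Fin N),
          (Stmt16.FC σ ∧ S ⊆ T σ) ↔ (Stmt16.FC σ ∧ ∀ a ∈ S, σ a = τ a) := by
        intro σ
        apply and_congr_right'
        rw [hT]
        constructor
        · intro hsub a ha
          have := hsub ha
          simp only [Finset.mem_filter] at this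
          exact this.2
        · intro hall x hx
          exact Finset.mem_filter.mpr ⟨Finset.mem_univ _, hall x hx⟩
      rw [Finset.filter_congr (fun σ _ => hpred σ), key S, nsmul_eq_mul, mul_comm]
    simp_rw [e5]
    have e6 : ∑ S ∈ (Finset.univ : Finset (Fin N)).powerset,
          (-1 : ℤ) ^ S.card * ((N - S.card - 1).factorial : ℤ)
        = ∑ h ∈ Finset.range (N + 1), ∑ S ∈ Finset.powersetCard h (Finset.univ : Finset (Fin N)),
            (-1 : ℤ) ^ S.card * ((N - S.card - 1).factorial : ℤ) := by
      rw [Finset.sum_powerset]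
      rw [Finset.card_univ, Fintype.card_fin]
    rw [e6]
    have e7 : ∀ h ∈ Finset.range (N + 1),
        ∑ S ∈ Finset.powersetCard h (Finset.univ : Finset (Fin N)),
            (-1 : ℤ) ^ S.card * ((N - S.card - 1).factorial : ℤ)
        = (N.choose h : ℤ) * ((-1 : ℤ) ^ h * ((N - h - 1).factorial : ℤ)) := by
      intro h _
      have := Finset.sum_powersetCard h (Finset.univ : Finset (Fin N))
        (fun c => (-1 : ℤ) ^ c * ((N - c - 1).factorial : ℤ))
      rw [this, Finset.card_univ, Fintype.card_fin, nsmul_eq_mul]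
    rw [Finset.sum_congr rfl e7, Finset.sum_range_succ]
    rw [Nat.choose_self]
    have : N - N - 1 = 0 := by omega
    rw [this]
    simp only [Nat.cast_one, one_mul, Nat.factorial_zero, Nat.cast_one, mul_one]
    congr 1
    refine Finset.sum_congr rfl fun h _ => ?_
    ring
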